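/- Suppose a function f assigns to each unit vector v ∈ ℂ² a value in {1,2,3,4} such that f(φᵢ) = i for the four pairwise non-proportional states φ₁ = α|0⟩+β|1⟩, φ₂ = β|0⟩+α|1⟩, φ₃ = α|0⟩-β|1⟩, φ₄ = β|0⟩-α|1⟩ (α, β real, α²+β²=1, αβ≠0, α²≠β²), and f is implemented by a POVM {E₁,E₂,E₃,E₄} in the sense that ⟨φᵢ, Eᵢ φᵢ⟩ = 1 for all i. Then ∑ᵢ tr(Eᵢ |φᵢ⟩⟨φᵢ|) = 4, but since ∑ᵢ Eᵢ = Id and each |φᵢ⟩⟨φᵢ| ≤ Id, we have ∑ᵢ tr(Eᵢ |φᵢ⟩⟨φᵢ|) ≤ ∑ᵢ tr(Eᵢ) = tr(Id) = 2, a contradiction. Hence no such POVM exists. -/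

import Mathlib

open scoped InnerProductSpace

lemma pos_inner_zero {E : Type*} [NormedAddCommGroup E] [InnerProductSpace ℂ E]
    [CompleteSpace E]
    {T : E →L[ℂ] E} (hT : T.IsPositive) {x : E} (hx : ⟪x, T x⟫_ℂ = 0) : T x = 0 := by
  have hsym : (T : E →ₗ[ℂ] E).IsSymmetric :=
    hT.1
  have hC : 0 ≤ T.reApplyInnerSelf (T x) := hT.2 (T x)
  set C := T.reApplyInnerSelf (T x) with hCdef
  have hq : ∀ s : ℝ, 0 ≤ 2 * s * ‖T x‖ ^ 2 + s ^ 2 * C := by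
    intro s
    have h0 := hT.2 (x + (s : ℂ) • T x)
    rw [ContinuousLinearMap.reApplyInnerSelf_apply] at h0
    have hTx : ⟪T x, x⟫_ℂ = 0 := by
      rw [← inner_conj_symm, hx, map_zero]
    have hTTx : ⟪T (T x), x⟫_ℂ = ⟪T x, T x⟫_ℂ := hsym (T x) x
    have hexp : ⟪T (x + (s : ℂ) • T x), x + (s : ℂ) • T x⟫_ℂ
        = ((2 * s * ‖T x‖ ^ 2 + s ^ 2 * C : ℝ) : ℂ) := by
      simp only [map_add, map_smul, inner_add_left, inner_add_right, inner_smul_left,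
        inner_smul_right, Complex.conj_ofReal, hTx, hTTx, hx]
      rw [inner_self_eq_norm_sq_to_K (𝕜 := ℂ), hCdef,
        ← hsym.coe_reApplyInnerSelf_apply (T x)]
      push_cast
      ring_nf
      rfl
    rw [hexp] at h0
    exact_mod_cast h0
  have hC1 : (0:ℝ) < C + 1 := by linarith
  have hN : ‖T x‖ ^ 2 = 0 := by
    by_contra hne
    have hNpos : 0 < ‖T x‖ ^ 2 := lt_of_le_of_ne (by positivity) (Ne.symm hne)
    set N := ‖T x‖ ^ 2 with hNdef
    set s : ℝ := N / (C + 1) with hs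
    have hspos : 0 < s := div_pos hNpos hC1
    have h2 : 2 * s * N ≤ s ^ 2 * C := by have := hq (-s); nlinarith [this]
    have h3 : s * C ≤ N := by
      rw [hs, div_mul_eq_mul_div, div_le_iff₀ hC1]
      nlinarith
    nlinarith
  rw [← norm_eq_zero]
  nlinarith [norm_nonneg (T x)]

/-- no POVM {E₁,E₂,E₃,E₄} on ℂ² can implement a function f on
unit vectors identifying each of the four pairwise non-proportional protocol
states with certainty (⟨φᵢ, Eᵢ φᵢ⟩ = 1 for all i): a trace counting argument
(∑ᵢ tr(Eᵢ|φᵢ⟩⟨φᵢ|) = 4 > 2 = tr(Id)) yields a contradiction. -/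
theorem no_povm_implements_identification (α β : ℝ) (h : α ^ 2 + β ^ 2 = 1)
    (hαβ : α * β ≠ 0) (hne : α ^ 2 ≠ β ^ 2)
    (φ : Fin 4 → EuclideanSpace ℂ (Fin 2))
    (hφ : φ = ![!₂[(α : ℂ), (β : ℂ)], !₂[(β : ℂ), (α : ℂ)],
                 !₂[(α : ℂ), (-β : ℂ)], !₂[(β : ℂ), (-α : ℂ)]])
    (f : EuclideanSpace ℂ (Fin 2) → Fin 4) (hf : ∀ i, f (φ i) = i)
    (E : Fin 4 → (EuclideanSpace ℂ (Fin 2) →L[ℂ] EuclideanSpace ℂ (Fin 2)))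
    (hpos : ∀ i, (E i).IsPositive)
    (hsum : ∑ i, E i = 1)
    (hperfect : ∀ i, ⟪φ i, E i (φ i)⟫_ℂ = 1) :
    False := by
  have hC : (α : ℂ) ^ 2 + (β : ℂ) ^ 2 = 1 := by exact_mod_cast h
  have hsymm : ∀ i, ((E i : EuclideanSpace ℂ (Fin 2) →ₗ[ℂ]
      EuclideanSpace ℂ (Fin 2))).IsSymmetric := fun i =>
    (hpos i).1
  have hreal : ∀ i x, ⟪x, (E i) x⟫_ℂ = (((E i).reApplyInnerSelf x : ℝ) : ℂ) := by
    intro i x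
    have h1 : ⟪(E i) x, x⟫_ℂ = ⟪x, (E i) x⟫_ℂ := hsymm i x x
    rw [← h1]
    exact ((hsymm i).coe_reApplyInnerSelf_apply x).symm
  -- for each unit vector φ k, the measurement values sum to 1
  have key : ∀ k, ⟪φ k, φ k⟫_ℂ = 1 → ⟪φ k, (E k) (φ k)⟫_ℂ = 1 →
      ∀ j, j ≠ k → (E j) (φ k) = 0 := by
    intro k hk hk1 j hj
    have hsum' : ∑ i, ⟪φ k, (E i) (φ k)⟫_ℂ = 1 := by
      rw [← inner_sum, ← ContinuousLinearMap.sum_apply, hsum]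
      simpa using hk
    set g : Fin 4 → ℝ := fun i => (E i).reApplyInnerSelf (φ k) with hg
    have hsumg : ∑ i, g i = 1 := by
      have : ((∑ i, g i : ℝ) : ℂ) = 1 := by
        push_cast
        rw [← hsum']
        exact Finset.sum_congr rfl fun i _ => (hreal i (φ k)).symm
      exact_mod_cast this
    have hgk : g k = 1 := by
      have := (hreal k (φ k)).symm.trans hk1
      exact_mod_cast this
    have hgnn : ∀ i, 0 ≤ g i := fun i => (hpos i).2 (φ k)
    have hgj : g j = 0 := by
      have hpair : g j + g k ≤ ∑ i, g i := by
        rw [← Finset.sum_pair hj]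
        exact Finset.sum_le_sum_of_subset_of_nonneg (Finset.subset_univ _)
          (fun i _ _ => hgnn i)
      have := hgnn j
      linarith [hsumg, hgk]
    apply pos_inner_zero (hpos j)
    rw [hreal j]
    exact_mod_cast hgj
  have hnorm1 : ⟪φ 1, φ 1⟫_ℂ = 1 := by
    simp [hφ, PiLp.inner_apply, Fin.sum_univ_two, Complex.conj_ofReal, -inner_self_eq_norm_sq_to_K]
    linear_combination hC
  have hnorm2 : ⟪φ 2, φ 2⟫_ℂ = 1 := by
    simp [hφ, PiLp.inner_apply, Fin.sum_univ_two, Complex.conj_ofReal, -inner_self_eq_norm_sq_to_K]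
    linear_combination hC
  have hE01 : (E 0) (φ 1) = 0 := key 1 hnorm1 (hperfect 1) 0 (by decide)
  have hE02 : (E 0) (φ 2) = 0 := key 2 hnorm2 (hperfect 2) 0 (by decide)
  have hcomb : φ 0 = ((2*α*β : ℝ) : ℂ) • φ 1 + ((α^2 - β^2 : ℝ) : ℂ) • φ 2 := by
    rw [hφ]
    ext k
    fin_cases k <;>
      simp [PiLp.add_apply, PiLp.smul_apply, smul_eq_mul] <;>
      push_cast <;>
      first
        | linear_combination (-(α : ℂ)) * hC
        | linear_combination (-(β : ℂ)) * hC
  have h0 := hperfect 0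
  rw [hcomb] at h0
  simp [map_add, map_smul, hE01, hE02] at h0
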